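/- Let a ≥ 0, Q > 10 + 4a, and define g(p) = (2*(p + Γ_M(p)) + a*(Γ_M(p)+1))/(p-1) for p > 1, where Γ_M(p) = 2p - 1 + 2*sqrt(p*(p-1)). Then g is strictly decreasing on (1, ∞), g(p) → +∞ as p → 1+, and g(p) → 10 + 4a as p → +∞. -/

import Mathlib

open Real Filter

theorem stmt_4 (a Q : ℝ) (ha : 0 ≤ a) (hQ : Q > 10 + 4 * a)
    (g : ℝ → ℝ)
    (hg : ∀ p : ℝ, 1 < p →
      g p = (2 * (p + (2 * p - 1 + 2 * Real.sqrt (p * (p - 1)))) +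
        a * ((2 * p - 1 + 2 * Real.sqrt (p * (p - 1))) + 1)) / (p - 1)) :
    StrictAntiOn g (Set.Ioi 1) ∧
      Tendsto g (nhdsWithin 1 (Set.Ioi 1)) atTop ∧
      Tendsto g atTop (nhds (10 + 4 * a)) := by
  have hc : (0:ℝ) < 4 + 2 * a := by linarith
  have key : ∀ p : ℝ, 1 < p →
      g p = (6 + 2*a) + (4 + 2*a) * ((p-1)⁻¹ + Real.sqrt (p/(p-1))) := by
    intro p hp
    have hp1 : (0:ℝ) < p - 1 := by linarith
    have hsq : Real.sqrt (p * (p - 1)) = Real.sqrt (p / (p - 1)) * (p - 1) := by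
      have h : p * (p - 1) = p / (p - 1) * (p - 1) ^ 2 := by
        field_simp
      rw [h, Real.sqrt_mul (div_nonneg (by linarith) hp1.le), Real.sqrt_sq hp1.le]
    rw [hg p hp, hsq]
    field_simp
    ring
  refine ⟨?_, ?_, ?_⟩
  · intro x hx y hy hxy
    simp only [Set.mem_Ioi] at hx hy
    have hx1 : (0:ℝ) < x - 1 := by linarith
    have hy1 : (0:ℝ) < y - 1 := by linarith
    rw [key x hx, key y hy]
    have h1 : (y-1)⁻¹ < (x-1)⁻¹ := by
      apply inv_strictAnti₀ hx1; linarith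
    have h2 : Real.sqrt (y/(y-1)) ≤ Real.sqrt (x/(x-1)) := by
      apply Real.sqrt_le_sqrt
      rw [div_le_div_iff₀ hy1 hx1]
      nlinarith
    nlinarith
  · have hc' : Tendsto (fun p : ℝ => p - 1) (nhdsWithin 1 (Set.Ioi 1)) (nhdsWithin 0 (Set.Ioi 0)) := by
      have h1 : Tendsto (fun p : ℝ => p - 1) (nhds 1) (nhds 0) := by
        simpa using (continuous_sub_right (1:ℝ)).tendsto 1
      refine tendsto_nhdsWithin_of_tendsto_nhds_of_eventually_within _
        (h1.mono_left nhdsWithin_le_nhds) ?_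
      filter_upwards [self_mem_nhdsWithin] with p hp
      simp only [Set.mem_Ioi] at hp ⊢
      linarith
    have hlow : Tendsto (fun p : ℝ => (4 + 2*a) * (p-1)⁻¹) (nhdsWithin 1 (Set.Ioi 1)) atTop :=
      Tendsto.const_mul_atTop hc (tendsto_inv_nhdsGT_zero.comp hc')
    refine tendsto_atTop_mono' _ ?_ hlow
    filter_upwards [self_mem_nhdsWithin] with p hp
    simp only [Set.mem_Ioi] at hp
    rw [key p hp]
    have hs := Real.sqrt_nonneg (p/(p-1))
    nlinarith
  · have h1 : Tendsto (fun p : ℝ => (p-1)⁻¹) atTop (nhds 0) :=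
      Tendsto.inv_tendsto_atTop (tendsto_atTop_add_const_right _ _ tendsto_id)
    have h2 : Tendsto (fun p : ℝ => p/(p-1)) atTop (nhds 1) := by
      have heq : ∀ᶠ p : ℝ in atTop, 1 + (p-1)⁻¹ = p/(p-1) := by
        filter_upwards [eventually_gt_atTop 1] with p hp
        have hp1 : p - 1 ≠ 0 := by intro h; linarith [hp]
        field_simp
        ring
      have := (tendsto_const_nhds (x := (1:ℝ))).add h1
      simp only [add_zero] at this
      exact this.congr' heq
    have h3 : Tendsto (fun p : ℝ => Real.sqrt (p/(p-1))) atTop (nhds 1) := by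
      have := (Real.continuous_sqrt.tendsto 1).comp h2
      rwa [Real.sqrt_one] at this
    have hlim : Tendsto (fun p : ℝ => (6 + 2*a) + (4 + 2*a) * ((p-1)⁻¹ + Real.sqrt (p/(p-1))))
        atTop (nhds (10 + 4*a)) := by
      have := (tendsto_const_nhds (x := (6 + 2*a : ℝ))).add ((h1.add h3).const_mul (4 + 2*a))
      convert this using 2
      ring
    refine hlim.congr' ?_
    filter_upwards [eventually_gt_atTop 1] with p hp
    exact (key p hp).symm
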